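/- If P is a projective cover of a regular category C, then P is pointed if and only if C is pointed; moreover, in that case, writing N for the null morphisms of P and M for the null morphisms of C, one has N^C = M and M_P = N. -/
import Mathlib


open CategoryTheory CategoryTheory.Limits

universe v u

variable {C : Type u} [Category.{v} C]

/-- A class of morphisms of a category. -/
abbrev MorClass (C : Type u) [Category.{v} C] :=
  ∀ ⦃X Y : C⦄, (X ⟶ Y) → Prop

/-- An ideal of morphisms: closed under pre- and post-composition with arbitrary morphisms. -/
def IsMorIdeal (N : MorClass C) : Prop :=
  (∀ ⦃X Y Z : C⦄ (f : X ⟶ Y) (g : Y ⟶ Z), N g → N (f ≫ g)) ∧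
  (∀ ⦃X Y Z : C⦄ (f : X ⟶ Y) (g : Y ⟶ Z), N f → N (f ≫ g))

/-- `k` is a weak `N`-kernel of `f`. -/
def IsWeakKernel (N : MorClass C) {K X Y : C} (f : X ⟶ Y) (k : K ⟶ X) : Prop :=
  N (k ≫ f) ∧ ∀ ⦃K' : C⦄ (k' : K' ⟶ X), N (k' ≫ f) → ∃ u : K' ⟶ K, u ≫ k = k'

/-- `k` is an `N`-kernel of `f` (unique factorization). -/
def IsNKernel (N : MorClass C) {K X Y : C} (f : X ⟶ Y) (k : K ⟶ X) : Prop :=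
  N (k ≫ f) ∧ ∀ ⦃K' : C⦄ (k' : K' ⟶ X), N (k' ≫ f) → ∃! u : K' ⟶ K, u ≫ k = k'

def HasWeakKernels (N : MorClass C) : Prop :=
  ∀ ⦃X Y : C⦄ (f : X ⟶ Y), ∃ (K : C) (k : K ⟶ X), IsWeakKernel N f k

def HasNKernels (N : MorClass C) : Prop :=
  ∀ ⦃X Y : C⦄ (f : X ⟶ Y), ∃ (K : C) (k : K ⟶ X), IsNKernel N f k

/-- The condition (∗π₀) for a pair of parallel morphisms: for a weak `N`-kernel `k` of `f₁`
and any morphism `g`, `g f₁ k = g f₂ k ⟺ g f₁ = g f₂`. -/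
def StarPi0 (N : MorClass C) {X Y : C} (f₁ f₂ : X ⟶ Y) : Prop :=
  ∀ ⦃K : C⦄ (k : K ⟶ X), IsWeakKernel N f₁ k →
    ∀ ⦃Z : C⦄ (g : Y ⟶ Z), (k ≫ f₁ ≫ g = k ≫ f₂ ≫ g ↔ f₁ ≫ g = f₂ ≫ g)

/-- `(u, v)` is a weak kernel pair of `f`. -/
def IsWeakKernelPair {P X Y : C} (f : X ⟶ Y) (u v : P ⟶ X) : Prop :=
  u ≫ f = v ≫ f ∧ ∀ ⦃Q : C⦄ (u' v' : Q ⟶ X), u' ≫ f = v' ≫ f →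
    ∃ w : Q ⟶ P, w ≫ u = u' ∧ w ≫ v = v'

/-- `(u, v)` is the kernel pair of `f`. -/
def IsKernelPairOf {P X Y : C} (f : X ⟶ Y) (u v : P ⟶ X) : Prop :=
  u ≫ f = v ≫ f ∧ ∀ ⦃Q : C⦄ (u' v' : Q ⟶ X), u' ≫ f = v' ≫ f →
    ∃! w : Q ⟶ P, w ≫ u = u' ∧ w ≫ v = v'

def HasWeakKernelPairs (C : Type u) [Category.{v} C] : Prop :=
  ∀ ⦃X Y : C⦄ (f : X ⟶ Y), ∃ (P : C) (u v : P ⟶ X), IsWeakKernelPair f u v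

def HasKernelPairs (C : Type u) [Category.{v} C] : Prop :=
  ∀ ⦃X Y : C⦄ (f : X ⟶ Y), ∃ (P : C) (u v : P ⟶ X), IsKernelPairOf f u v

/-- `f` is a coequalizer of the pair `(u, v)`. -/
def IsCoequalizerOf {P X Y : C} (u v : P ⟶ X) (f : X ⟶ Y) : Prop :=
  u ≫ f = v ≫ f ∧ ∀ ⦃Z : C⦄ (g : X ⟶ Z), u ≫ g = v ≫ g → ∃! h : Y ⟶ Z, f ≫ h = g

/-- `f` is a regular epimorphism: a coequalizer of some pair. -/
def IsRegEpi {X Y : C} (f : X ⟶ Y) : Prop :=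
  ∃ (P : C) (u v : P ⟶ X), IsCoequalizerOf u v f

/-- `(p₁, p₂)` is a pullback of `(f, g)`. -/
def IsPullbackSq {P X Y Z : C} (p₁ : P ⟶ X) (p₂ : P ⟶ Y) (f : X ⟶ Z) (g : Y ⟶ Z) : Prop :=
  p₁ ≫ f = p₂ ≫ g ∧ ∀ ⦃Q : C⦄ (q₁ : Q ⟶ X) (q₂ : Q ⟶ Y), q₁ ≫ f = q₂ ≫ g →
    ∃! w : Q ⟶ P, w ≫ p₁ = q₁ ∧ w ≫ p₂ = q₂

/-- A regular category: finitely complete, kernel pairs have coequalizers, and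
regular epimorphisms are stable under pullback. -/
structure IsRegularCat (C : Type u) [Category.{v} C] : Prop where
  hasFiniteLimits : HasFiniteLimits C
  coeqOfKernelPairs : ∀ ⦃P X Y : C⦄ (f : X ⟶ Y) (u v : P ⟶ X), IsKernelPairOf f u v →
    ∃ (Q : C) (q : X ⟶ Q), IsCoequalizerOf u v q
  regEpiStable : ∀ ⦃P X Y Z : C⦄ (p₁ : P ⟶ X) (p₂ : P ⟶ Y) (f : X ⟶ Z) (g : Y ⟶ Z),
    IsPullbackSq p₁ p₂ f g → IsRegEpi g → IsRegEpi p₁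

/-- `P` (a class of objects, regarded as a full subcategory) is a projective cover of `C`. -/
structure IsProjectiveCover (P : Set C) : Prop where
  proj : ∀ ⦃X : C⦄, X ∈ P → ∀ ⦃A B : C⦄ (e : A ⟶ B), IsRegEpi e →
    ∀ f : X ⟶ B, ∃ g : X ⟶ A, g ≫ e = f
  covers : ∀ X : C, ∃ (Q : C) (_ : Q ∈ P) (e : Q ⟶ X), IsRegEpi e

/-- An ideal of the full subcategory on `P`, encoded as a class of morphisms of `C`
supported on `P`-objects and closed under composition with `P`-morphisms. -/
def IsMorIdealOn (P : Set C) (N : MorClass C) : Prop :=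
  (∀ ⦃X Y : C⦄ (f : X ⟶ Y), N f → X ∈ P ∧ Y ∈ P) ∧
  (∀ ⦃X Y Z : C⦄ (f : X ⟶ Y) (g : Y ⟶ Z), X ∈ P → N g → N (f ≫ g)) ∧
  (∀ ⦃X Y Z : C⦄ (f : X ⟶ Y) (g : Y ⟶ Z), Z ∈ P → N f → N (f ≫ g))

/-- The extension `N^C` of an ideal `N` of the full subcategory `P` to `C`. -/
def extClass (P : Set C) (N : MorClass C) : MorClass C := fun X Y f =>
  ∃ (A B : C) (_ : A ∈ P) (_ : B ∈ P) (n : A ⟶ B) (e : A ⟶ X) (e' : B ⟶ Y),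
    IsRegEpi e ∧ IsRegEpi e' ∧ N n ∧ e ≫ f = n ≫ e'

/-- The restriction `M_P` of an ideal `M` of `C` to the full subcategory `P`. -/
def restClass (P : Set C) (M : MorClass C) : MorClass C := fun X Y f =>
  X ∈ P ∧ Y ∈ P ∧ M f

/-- `k` is a weak `N`-kernel of `f` computed in the full subcategory `P`. -/
def IsWeakKernelOn (P : Set C) (N : MorClass C) {K X Y : C} (f : X ⟶ Y) (k : K ⟶ X) : Prop :=
  K ∈ P ∧ N (k ≫ f) ∧ ∀ ⦃K' : C⦄, K' ∈ P → ∀ k' : K' ⟶ X, N (k' ≫ f) →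
    ∃ u : K' ⟶ K, u ≫ k = k'

def HasWeakKernelsOn (P : Set C) (N : MorClass C) : Prop :=
  ∀ ⦃X Y : C⦄, X ∈ P → Y ∈ P → ∀ f : X ⟶ Y, ∃ (K : C) (k : K ⟶ X), IsWeakKernelOn P N f k

/-- The condition (∗π₀) interpreted in the full subcategory `P`. -/
def StarPi0On (P : Set C) (N : MorClass C) {X Y : C} (f₁ f₂ : X ⟶ Y) : Prop :=
  ∀ ⦃K : C⦄ (k : K ⟶ X), IsWeakKernelOn P N f₁ k →
    ∀ ⦃Z : C⦄, Z ∈ P → ∀ g : Y ⟶ Z, (k ≫ f₁ ≫ g = k ≫ f₂ ≫ g ↔ f₁ ≫ g = f₂ ≫ g)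

/-- Every internal reflexive graph of `C` satisfies (∗π₀). -/
def ReflGraphsStarPi0 (N : MorClass C) : Prop :=
  ∀ ⦃G₁ G₀ : C⦄ (d c : G₁ ⟶ G₀) (e : G₀ ⟶ G₁), e ≫ d = 𝟙 G₀ → e ≫ c = 𝟙 G₀ →
    StarPi0 N d c

/-- Every internal reflexive graph of the full subcategory `P` satisfies (∗π₀). -/
def ReflGraphsStarPi0On (P : Set C) (N : MorClass C) : Prop :=
  ∀ ⦃G₁ G₀ : C⦄, G₁ ∈ P → G₀ ∈ P → ∀ (d c : G₁ ⟶ G₀) (e : G₀ ⟶ G₁),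
    e ≫ d = 𝟙 G₀ → e ≫ c = 𝟙 G₀ → StarPi0On P N d c

/-- Every regular epimorphism is a coequalizer of its kernel star (star-regularity condition). -/
def RegEpisCoeqOfKernelStar (N : MorClass C) : Prop :=
  ∀ ⦃X Y : C⦄ (f : X ⟶ Y), IsRegEpi f →
    ∀ ⦃P : C⦄ (u v : P ⟶ X), IsKernelPairOf f u v →
      ∀ ⦃K : C⦄ (k : K ⟶ P), IsNKernel N u k →
        IsCoequalizerOf (k ≫ u) (k ≫ v) f

/-- `f` is `N`-saturating. -/
def IsSaturating (N : MorClass C) {P' Y : C} (f : P' ⟶ Y) : Prop :=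
  ∀ ⦃X : C⦄ (n : X ⟶ Y), N n →
    ∃ (Z : C) (g : Z ⟶ X) (m : Z ⟶ P'), IsRegEpi g ∧ N m ∧ m ≫ f = g ≫ n

/-- `C` is a regular completion of `P`: `P` is a projective cover and every object of `C`
admits a monomorphism into a finite product of `P`-objects (expressed via a jointly monic
finite family). -/
def IsRegularCompletionOf (P : Set C) : Prop :=
  IsProjectiveCover P ∧
    ∀ X : C, ∃ (n : ℕ) (obj : Fin n → C) (_ : ∀ i, obj i ∈ P) (m : ∀ i, X ⟶ obj i),
      ∀ ⦃W : C⦄ (a b : W ⟶ X), (∀ i, a ≫ m i = b ≫ m i) → a = b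

/-- `C` is pointed via the ideal `N` of null morphisms. -/
def IsPointedVia (N : MorClass C) : Prop :=
  IsMorIdeal N ∧ ∀ X Y : C, ∃! f : X ⟶ Y, N f

/-- The full subcategory `P` is pointed via the ideal `N` of null morphisms. -/
def IsPointedOn (P : Set C) (N : MorClass C) : Prop :=
  IsMorIdealOn P N ∧ ∀ ⦃X Y : C⦄, X ∈ P → Y ∈ P → ∃! f : X ⟶ Y, N f

/-- `f` is a normal epimorphism (a cokernel) with respect to the ideal `N`. -/
def IsNormalEpi (N : MorClass C) {X Y : C} (f : X ⟶ Y) : Prop :=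
  ∃ (A : C) (h : A ⟶ X), N (h ≫ f) ∧
    ∀ ⦃Z : C⦄ (g : X ⟶ Z), N (h ≫ g) → ∃! t : Y ⟶ Z, f ≫ t = g

lemma regEpi_id (X : C) : IsRegEpi (𝟙 X) :=
  ⟨X, 𝟙 X, 𝟙 X, rfl, fun _ g _ => ⟨g, by simp, fun y hy => by simpa using hy⟩⟩

lemma IsRegEpi.cancel {X Y : C} {f : X ⟶ Y} (hf : IsRegEpi f) {Z : C} {g g' : Y ⟶ Z}
    (h : f ≫ g = f ≫ g') : g = g' := by
  obtain ⟨Q, u, v, huv, hcoeq⟩ := hf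
  obtain ⟨t, _, hun⟩ := hcoeq (f ≫ g)
    (by rw [← Category.assoc, huv, Category.assoc])
  exact (hun g rfl).trans (hun g' h.symm).symm

lemma pointedVia_unique {M M' : MorClass C} (hM : IsPointedVia M) (hM' : IsPointedVia M') :
    M = M' := by
  funext X Y f
  obtain ⟨a, ha, _⟩ := hM.2 X X
  obtain ⟨b, hb, _⟩ := hM'.2 X Y
  have hab : M (a ≫ b) := hM.1.2 a b ha
  have hab' : M' (a ≫ b) := hM'.1.1 a b hb
  apply propext
  constructor
  · intro hf
    rw [(hM.2 X Y).unique hf hab]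
    exact hab'
  · intro hf
    rw [(hM'.2 X Y).unique hf hab']
    exact hab

/-- Two `P`-null morphisms composed with regular epis to the same object agree. -/
lemma null_comp_regEpi_eq (P : Set C) (hP : IsProjectiveCover P) {N : MorClass C}
    (hN : IsPointedOn P N) {A B B' Y : C} (hA : A ∈ P) (hB : B ∈ P) (hB' : B' ∈ P)
    {m : A ⟶ B} {m' : A ⟶ B'} (hm : N m) (hm' : N m')
    {s : B ⟶ Y} {s' : B' ⟶ Y} (hs : IsRegEpi s) (_ : IsRegEpi s') :
    m ≫ s = m' ≫ s' := by
  obtain ⟨t, ht⟩ := hP.proj hB' s hs s'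
  have h1 : N (m' ≫ t) := hN.1.2.2 m' t hB hm'
  have h2 : m = m' ≫ t := (hN.2 hA hB).unique hm h1
  rw [h2, Category.assoc, ht]

lemma extClass_pointed (P : Set C) (hP : IsProjectiveCover P) {N : MorClass C}
    (hN : IsPointedOn P N) : IsPointedVia (extClass P N) := by
  have exist : ∀ X Y : C, ∃ f : X ⟶ Y, extClass P N f := by
    intro X Y
    obtain ⟨A, hA, e, he⟩ := hP.covers X
    obtain ⟨B, hB, e', he'⟩ := hP.covers Y
    obtain ⟨n, hn, _⟩ := hN.2 hA hB
    obtain ⟨Q, u, v, huv, hcoeq⟩ := he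
    obtain ⟨Q', hQ', q, hq⟩ := hP.covers Q
    have hun : q ≫ u ≫ n = q ≫ v ≫ n := by
      have h1 : N ((q ≫ u) ≫ n) := hN.1.2.1 (q ≫ u) n hQ' hn
      have h2 : N ((q ≫ v) ≫ n) := hN.1.2.1 (q ≫ v) n hQ' hn
      have := (hN.2 hQ' hB).unique h1 h2
      simpa [Category.assoc] using this
    have huvn : u ≫ n ≫ e' = v ≫ n ≫ e' := by
      have : u ≫ n = v ≫ n := hq.cancel hun
      rw [← Category.assoc, this, Category.assoc]
    obtain ⟨f, hf, _⟩ := hcoeq (n ≫ e') huvn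
    exact ⟨f, A, B, hA, hB, n, e, e', ⟨Q, u, v, huv, hcoeq⟩, he', hn, hf⟩
  have uniq : ∀ ⦃X Y : C⦄ (f f' : X ⟶ Y), extClass P N f → extClass P N f' → f = f' := by
    rintro X Y f f' ⟨A, B, hA, hB, n, e, e', he, he', hn, hf⟩
      ⟨A', B', hA', hB', n', e₂, e₂', he₂, he₂', hn', hf'⟩
    obtain ⟨t, ht⟩ := hP.proj hA e₂ he₂ e
    apply he.cancel
    have h1 : N (t ≫ n') := hN.1.2.1 t n' hA hn'
    have : e ≫ f' = (t ≫ n') ≫ e₂' := by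
      rw [← ht, Category.assoc, hf', ← Category.assoc]
    rw [hf, this]
    exact null_comp_regEpi_eq P hP hN hA hB hB' hn h1 he' he₂'
  refine ⟨⟨?_, ?_⟩, fun X Y => ?_⟩
  · rintro X Y Z f g ⟨A, B, hA, hB, n, e, e', he, he', hn, hg⟩
    obtain ⟨A', hA', eX, heX⟩ := hP.covers X
    obtain ⟨l, hl⟩ := hP.proj hA' e he (eX ≫ f)
    refine ⟨A', B, hA', hB, l ≫ n, eX, e', heX, he', hN.1.2.1 l n hA' hn, ?_⟩
    rw [← Category.assoc, ← hl, Category.assoc, hg, Category.assoc]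
  · rintro X Y Z f g ⟨A, B, hA, hB, n, e, e', he, he', hn, hf⟩
    obtain ⟨B', hB', eZ, heZ⟩ := hP.covers Z
    obtain ⟨l, hl⟩ := hP.proj hB eZ heZ (e' ≫ g)
    refine ⟨A, B', hA, hB', n ≫ l, e, eZ, he, heZ, hN.1.2.2 n l hB' hn, ?_⟩
    rw [← Category.assoc, hf, Category.assoc, Category.assoc, hl]
  · obtain ⟨f, hf⟩ := exist X Y
    exact ⟨f, hf, fun g hg => uniq g f hg hf⟩

lemma restClass_pointedOn (P : Set C) {M : MorClass C} (hM : IsPointedVia M) :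
    IsPointedOn P (restClass P M) := by
  refine ⟨⟨fun X Y f hf => ⟨hf.1, hf.2.1⟩, fun X Y Z f g hX hg => ⟨hX, hg.2.1, hM.1.1 f g hg.2.2⟩,
    fun X Y Z f g hZ hf => ⟨hf.1, hZ, hM.1.2 f g hf.2.2⟩⟩, fun X Y hX hY => ?_⟩
  obtain ⟨f, hf, hu⟩ := hM.2 X Y
  exact ⟨f, ⟨hX, hY, hf⟩, fun g hg => hu g hg.2.2⟩

/-- If P is a projective cover of a regular category C, then P is pointed
iff C is pointed; moreover, for the respective ideals of null morphisms N (of P) and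
M (of C) one has N^C = M and M_P = N. -/
theorem statement16 (hC : IsRegularCat C) (P : Set C) (hP : IsProjectiveCover P) :
    ((∃ N : MorClass C, IsPointedOn P N) ↔ (∃ M : MorClass C, IsPointedVia M)) ∧
      ∀ N M : MorClass C, IsPointedOn P N → IsPointedVia M →
        extClass P N = M ∧ restClass P M = N := by
  constructor
  · constructor
    · rintro ⟨N, hN⟩
      exact ⟨extClass P N, extClass_pointed P hP hN⟩
    · rintro ⟨M, hM⟩
      exact ⟨restClass P M, restClass_pointedOn P hM⟩
  · intro N M hN hM
    have hext : extClass P N = M := pointedVia_unique (extClass_pointed P hP hN) hM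
    refine ⟨hext, ?_⟩
    funext X Y f
    apply propext
    constructor
    · rintro ⟨hX, hY, hf⟩
      obtain ⟨n, hn, _⟩ := hN.2 hX hY
      have hMn : M n := by
        rw [← hext]
        exact ⟨X, Y, hX, hY, n, 𝟙 X, 𝟙 Y, regEpi_id X, regEpi_id Y, hn, by simp⟩
      rwa [(hM.2 X Y).unique hf hMn]
    · intro hf
      obtain ⟨hX, hY⟩ := hN.1.1 f hf
      refine ⟨hX, hY, ?_⟩
      rw [← hext]
      exact ⟨X, Y, hX, hY, f, 𝟙 X, 𝟙 Y, regEpi_id X, regEpi_id Y, hf, by simp⟩
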